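/- If ρ lies in the box {w : 1/2 < Re w ≤ 1/2 + Y, |Im w − T| ≤ Y} (excluding the left boundary Re w = 1/2), then the angle at ρ subtended by the segment from 1/2 + i(T−Y) to 1/2 + i(T+Y) is bounded below by an absolute positive constant. -/

import Mathlib

open Complex Real Set

set_option maxHeartbeats 1000000 in
theorem angle_bounded_below_in_box :
    ∃ c : ℝ, 0 < c ∧ ∀ T Y β γ : ℝ, 0 < Y →
      1/2 < β → β ≤ 1/2 + Y → |γ - T| ≤ Y →
      c ≤ EuclideanGeometry.angle ((1/2 : ℂ) + (T - Y) * I) ((β : ℂ) + γ * I)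
            ((1/2 : ℂ) + (T + Y) * I) := by
  have h5 : (0:ℝ) < Real.sqrt 5 := Real.sqrt_pos.mpr (by norm_num)
  have h25 : (2:ℝ) < Real.sqrt 5 := by
    nlinarith [Real.sq_sqrt (by norm_num : (5:ℝ) ≥ 0)]
  refine ⟨Real.arccos (2 / Real.sqrt 5), Real.arccos_pos.mpr ?_, ?_⟩
  · rw [div_lt_one h5]; exact h25
  intro T Y β γ hY hβ hβY hγ
  set x : ℝ := β - 1/2 with hx
  set d : ℝ := γ - T with hd
  have hx0 : 0 < x := by simp [hx]; linarith
  have hxY : x ≤ Y := by simp [hx]; linarith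
  have hdY : d^2 ≤ Y^2 := by
    have := abs_le.mp hγ
    nlinarith [this.1, this.2]
  set u : ℂ := ((1/2 : ℂ) + (T - Y) * I) - ((β : ℂ) + γ * I) with hu
  set v : ℂ := ((1/2 : ℂ) + (T + Y) * I) - ((β : ℂ) + γ * I) with hv
  have hure : u.re = -x := by simp [hu, hx]; try ring
  have huim : u.im = -(Y + d) := by simp [hu, hd]; try ring
  have hvre : v.re = -x := by simp [hv, hx]; try ring
  have hvim : v.im = Y - d := by simp [hv, hd]; try ring
  clear_value x d
  have hu0 : u ≠ 0 := fun h => by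
    have : u.re = 0 := by rw [h]; simp
    rw [hure] at this; linarith
  have hv0 : v ≠ 0 := fun h => by
    have : v.re = 0 := by rw [h]; simp
    rw [hvre] at this; linarith
  have hnu : 0 < ‖u‖ := norm_pos_iff.mpr hu0
  have hnv : 0 < ‖v‖ := norm_pos_iff.mpr hv0
  have hangle : EuclideanGeometry.angle ((1/2 : ℂ) + (T - Y) * I) ((β : ℂ) + γ * I)
      ((1/2 : ℂ) + (T + Y) * I) = Real.arccos ((inner ℝ u v : ℝ) / (‖u‖ * ‖v‖)) := by
    unfold EuclideanGeometry.angle InnerProductGeometry.angle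
    rfl
  rw [hangle]
  clear_value u v
  clear hu hv hu0 hv0 hangle
  have harc : ∀ a b : ℝ, a ≤ b → Real.arccos b ≤ Real.arccos a := by
    intro a b hab
    unfold Real.arccos
    have := Real.monotone_arcsin hab
    linarith
  apply harc
  rw [div_le_div_iff₀ (mul_pos hnu hnv) h5]
  -- compute the inner product and the norms
  have hinner : (inner ℝ u v : ℝ) = x^2 + d^2 - Y^2 := by
    rw [Complex.inner]
    simp [Complex.mul_re, hure, huim, hvre, hvim]
    ring
  have hnorm2u : ‖u‖^2 = x^2 + (Y + d)^2 := by
    rw [Complex.sq_norm, Complex.normSq_apply, hure, huim]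
    ring
  have hnorm2v : ‖v‖^2 = x^2 + (Y - d)^2 := by
    rw [Complex.sq_norm, Complex.normSq_apply, hvre, hvim]
    ring
  rw [hinner]
  -- it suffices to square both sides (when LHS is positive)
  rcases le_or_gt (x^2 + d^2 - Y^2) 0 with h | h
  · have : 0 ≤ (‖u‖ * ‖v‖) * 2 := by positivity
    nlinarith [mul_pos hnu hnv, h5]
  · have hS : Y^2 ≤ x^2 + d^2 := by linarith
    have key : 5 * (x^2 + d^2 - Y^2)^2 ≤ 4 * ((x^2 + (Y+d)^2) * (x^2 + (Y-d)^2)) := by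
      have hle : x^2 + d^2 - Y^2 ≤ 4 * (x * Y) := by nlinarith [mul_pos hx0 hY]
      have hsq : (x^2 + d^2 - Y^2) * (x^2 + d^2 - Y^2) ≤ (4 * (x * Y)) * (4 * (x * Y)) :=
        mul_self_le_mul_self h.le hle
      nlinarith [hsq]
    have hsq : ((x^2 + d^2 - Y^2) * Real.sqrt 5)^2 ≤ ((‖u‖ * ‖v‖) * 2)^2 := by
      have e1 : ((x^2 + d^2 - Y^2) * Real.sqrt 5)^2 = (x^2 + d^2 - Y^2)^2 * 5 := by
        rw [mul_pow, Real.sq_sqrt (by norm_num : (5:ℝ) ≥ 0)]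
      have e2 : ((‖u‖ * ‖v‖) * 2)^2 = ((x^2 + (Y+d)^2) * (x^2 + (Y-d)^2)) * 4 := by
        rw [mul_pow, mul_pow, hnorm2u, hnorm2v]; ring
      rw [e1, e2]; linarith
    have h1 : 0 ≤ (‖u‖ * ‖v‖) * 2 := by positivity
    nlinarith [hsq, mul_pos (mul_pos h hnu) hnv]
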